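/- For every nonzero γ ∈ ℂ, the map σ(α₂, α₃, α₄) = (i·α₂·α₃⁻², α₃⁻¹, -i·α₄) sends solutions of the system {α₄⁸ - 4α₄⁴ + γ² = 0, α₃² - i·α₃·α₄² - 1 = 0, γ·α₂ - 2i·α₄³ + α₃·α₄⁵ = 0} with α₃ ≠ 0 to solutions of the same system. -/

import Mathlib

open Complex

/-- The map σ(α₂, α₃, α₄) = (i·α₂·α₃⁻², α₃⁻¹, -i·α₄) sends solutions of the
point-scheme system (with α₃ ≠ 0) to solutions of the same system. -/
theorem stmt_4 (γ α₂ α₃ α₄ : ℂ) (hγ : γ ≠ 0) (hα₃ : α₃ ≠ 0)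
    (h1 : α₄ ^ 8 - 4 * α₄ ^ 4 + γ ^ 2 = 0)
    (h2 : α₃ ^ 2 - I * α₃ * α₄ ^ 2 - 1 = 0)
    (h3 : γ * α₂ - 2 * I * α₄ ^ 3 + α₃ * α₄ ^ 5 = 0) :
    (-I * α₄) ^ 8 - 4 * (-I * α₄) ^ 4 + γ ^ 2 = 0 ∧
    (α₃⁻¹) ^ 2 - I * α₃⁻¹ * (-I * α₄) ^ 2 - 1 = 0 ∧
    γ * (I * α₂ * (α₃ ^ 2)⁻¹) - 2 * I * (-I * α₄) ^ 3 + α₃⁻¹ * (-I * α₄) ^ 5 = 0 := by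
  have hI : I ^ 2 = -1 := Complex.I_sq
  refine ⟨?_, ?_, ?_⟩
  · linear_combination h1 + ((I^6 - I^4 + I^2 - 1) * α₄^8 - 4 * (I^2 - 1) * α₄^4) * hI
  · field_simp
    linear_combination -h2 - I * α₃ * α₄^2 * hI
  · field_simp
    linear_combination I * h3 + 2 * α₄^3 * h2 +
      (2 * (I^2 - 1) * α₃^2 * α₄^3 - I * (I^2 - 1) * α₃ * α₄^5 + 2 * α₄^3) * hI
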